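/- Let n = p + q + z with p ≥ 1, q ≥ 1, z ≥ 0, and let J = diag(I_p, −I_q, 0_z) ∈ ℂ^{n×n} (block diagonal). Let A, B ∈ ℂ^{n×n} be Hermitian and suppose there exists an invertible U ∈ ℂ^{n×n} with Uᴴ B U = J and Uᴴ A U = diag(a₁, …, aₙ) where all a_i ≥ 0 and a₁ ≤ a₂ ≤ … ≤ a_p (so the positive-type finite eigenvalues of the diagonalizable positive semi-definite pencil A − λB are λ_i⁺ = a_i, i = 1,…,p, in ascending order). Let 1 ≤ k ≤ p and let D ∈ ℂ^{k×k} be Hermitian positive semi-definite with eigenvalues ω₁ ≥ ω₂ ≥ … ≥ ω_k ≥ 0. Then the real number Σ_{i=1}^{k} ω_i a_i is the minimum (a lower bound that is attained) of the set { t ∈ ℝ : ∃ X ∈ ℂ^{n×k}, Xᴴ B X = I_k and t = Re(trace(D Xᴴ A X)) }. -/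

import Mathlib

open Matrix BigOperators
open scoped ComplexOrder

lemma psd_diag_re {n : Type*} [Fintype n] [DecidableEq n] {M : Matrix n n ℂ}
    (hM : M.PosSemidef) (i : n) : 0 ≤ (M i i).re := by
  have h := hM.re_dotProduct_nonneg (Pi.single i 1)
  simpa [Matrix.mulVec_single, dotProduct, Pi.single_apply, Finset.sum_ite_eq',
    apply_ite] using h

lemma trace_conj_diag {p s : ℕ} (b : Fin p → ℝ) (W : Matrix (Fin p) (Fin s) ℂ) :
    Matrix.trace (Wᴴ * Matrix.diagonal (fun i => (b i : ℂ)) * W)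
      = ((∑ i, b i * ∑ j, Complex.normSq (W i j) : ℝ) : ℂ) := by
  have this : ∀ j, ((Wᴴ * Matrix.diagonal (fun i => (b i : ℂ)) * W) j j)
      = ∑ i, (b i * Complex.normSq (W i j) : ℝ) := by
    intro j
    rw [Matrix.mul_assoc, Matrix.mul_apply, Complex.ofReal_sum]
    refine Finset.sum_congr rfl fun i _ => ?_
    rw [Matrix.conjTranspose_apply, Matrix.diagonal_mul]
    push_cast
    rw [← mul_assoc, mul_comm (star (W i j)) ((b i : ℂ)), mul_assoc]
    congr 1
    rw [Complex.normSq_eq_conj_mul_self]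
    rfl
  rw [Matrix.trace]
  simp only [Matrix.diag]
  rw [Finset.sum_congr rfl fun j _ => this j]
  push_cast
  rw [Finset.sum_comm]
  refine Finset.sum_congr rfl fun i _ => ?_
  rw [Finset.mul_sum]

lemma rearrange_aux {p s : ℕ} (hs : 1 ≤ s) (hsp : s ≤ p) (b : Fin p → ℝ)
    (hb0 : ∀ i, 0 ≤ b i) (hbmono : ∀ i j : Fin p, i ≤ j → b i ≤ b j)
    (c : Fin p → ℝ) (hc0 : ∀ i, 0 ≤ c i) (hc1 : ∀ i, c i ≤ 1)
    (hcs : ∑ i, c i = s) :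
    ∑ j : Fin s, b (Fin.castLE hsp j) ≤ ∑ i, b i * c i := by
  have hs1p : s - 1 < p := by omega
  set t : ℝ := b ⟨s - 1, hs1p⟩ with ht
  have ht0 : 0 ≤ t := hb0 _
  set T : Finset (Fin p) := Finset.univ.map ⟨Fin.castLE hsp, Fin.castLE_injective hsp⟩ with hT
  have hmem : ∀ i : Fin p, i ∈ T ↔ (i : ℕ) < s := by
    intro i
    constructor
    · rintro hi
      rw [hT, Finset.mem_map] at hi
      obtain ⟨j, -, rfl⟩ := hi
      exact j.isLt
    · intro hi
      rw [hT, Finset.mem_map]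
      exact ⟨⟨(i : ℕ), hi⟩, Finset.mem_univ _, by ext; rfl⟩
  have hcard : T.card = s := by rw [hT]; simp
  have hsumT : ∑ j : Fin s, b (Fin.castLE hsp j) = ∑ i ∈ T, b i := by
    rw [hT, Finset.sum_map]; rfl
  have h1 : ∑ i ∈ T, (b i + t * (c i - 1)) ≤ ∑ i ∈ T, b i * c i := by
    refine Finset.sum_le_sum fun i hi => ?_
    have hi' : (i : ℕ) < s := (hmem i).mp hi
    have hbt : b i ≤ t := hbmono i ⟨s - 1, hs1p⟩ (by rw [Fin.le_def]; simp; omega)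
    have := mul_le_mul_of_nonpos_right hbt (by linarith [hc1 i] : c i - 1 ≤ 0)
    nlinarith
  have h2 : ∑ i ∈ Tᶜ, t * c i ≤ ∑ i ∈ Tᶜ, b i * c i := by
    refine Finset.sum_le_sum fun i hi => ?_
    have hi' : ¬ (i : ℕ) < s := fun h => by
      rw [Finset.mem_compl] at hi; exact hi ((hmem i).mpr h)
    have hbt : t ≤ b i := hbmono ⟨s - 1, hs1p⟩ i (by rw [Fin.le_def]; simp; omega)
    exact mul_le_mul_of_nonneg_right hbt (hc0 i)
  have h3 : ∑ i ∈ T, c i + ∑ i ∈ Tᶜ, c i = (s : ℝ) := by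
    rw [Finset.sum_add_sum_compl]; exact hcs
  have h4 : ∑ i ∈ T, (b i + t * (c i - 1))
      = ∑ i ∈ T, b i + t * (∑ i ∈ T, c i) - t * s := by
    rw [Finset.sum_add_distrib]
    have : ∑ i ∈ T, t * (c i - 1) = t * (∑ i ∈ T, c i) - t * T.card := by
      simp [mul_sub, Finset.sum_sub_distrib, Finset.mul_sum]; ring
    rw [this, hcard]
    ring
  have h6 : ∑ i ∈ T, b i * c i + ∑ i ∈ Tᶜ, b i * c i = ∑ i, b i * c i := by
    rw [Finset.sum_add_sum_compl]
  have h5 : ∑ i ∈ Tᶜ, t * c i = t * ∑ i ∈ Tᶜ, c i := by rw [Finset.mul_sum]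
  rw [hsumT]
  nlinarith [add_le_add h1 h2]

lemma psd_diag_re' {n : Type*} [Fintype n] [DecidableEq n] {M : Matrix n n ℂ}
    (hM : M.PosSemidef) (i : n) : 0 ≤ (M i i).re := by
  have h := hM.re_dotProduct_nonneg (Pi.single i 1)
  simpa [Matrix.mulVec_single, dotProduct, Pi.single_apply, Finset.sum_ite_eq',
    apply_ite] using h

lemma psd_trace_re {n : Type*} [Fintype n] [DecidableEq n] {M : Matrix n n ℂ}
    (hM : M.PosSemidef) : 0 ≤ (Matrix.trace M).re := by
  rw [Matrix.trace, Complex.re_sum]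
  exact Finset.sum_nonneg fun i _ => psd_diag_re' hM i

section core
variable {p s : ℕ}

open scoped MatrixOrder in
lemma core_aux (hs : 1 ≤ s) (hsp : s ≤ p) (b : Fin p → ℝ)
    (hb0 : ∀ i, 0 ≤ b i) (hbmono : ∀ i j : Fin p, i ≤ j → b i ≤ b j)
    (W : Matrix (Fin p) (Fin s) ℂ) (hW : (Wᴴ * W - 1).PosSemidef)
    (rearrange : ∀ c : Fin p → ℝ, (∀ i, 0 ≤ c i) → (∀ i, c i ≤ 1) → (∑ i, c i = s) →
      ∑ j : Fin s, b (Fin.castLE hsp j) ≤ ∑ i, b i * c i)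
    (trace_conj_diag : ∀ {m : ℕ} (d : Fin p → ℝ) (V : Matrix (Fin p) (Fin m) ℂ),
      Matrix.trace (Vᴴ * Matrix.diagonal (fun i => (d i : ℂ)) * V)
        = ((∑ i, d i * ∑ j, Complex.normSq (V i j) : ℝ) : ℂ)) :
    ∑ j : Fin s, b (Fin.castLE hsp j) ≤ ∑ i, b i * ∑ j, Complex.normSq (W i j) := by
  set M : Matrix (Fin p) (Fin p) ℂ := Matrix.diagonal (fun i => (b i : ℂ)) with hMdef
  have hM : M.PosSemidef :=
    Matrix.PosSemidef.diagonal (fun i => Complex.zero_le_real.mpr (hb0 i))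
  set G : Matrix (Fin s) (Fin s) ℂ := Wᴴ * W with hGdef
  have hGpsd : G.PosSemidef := Matrix.posSemidef_conjTranspose_mul_self W
  have hGpd : G.PosDef := by
    refine Matrix.PosDef.of_dotProduct_mulVec_pos hGpsd.1 fun x hx => ?_
    have h1 : (0:ℂ) < dotProduct (star x) x :=
      dotProduct_star_self_pos_iff.mpr hx
    have h2 := hW.dotProduct_mulVec_nonneg x
    rw [Matrix.sub_mulVec, Matrix.one_mulVec, dotProduct_sub, sub_nonneg] at h2
    exact lt_of_lt_of_le h1 h2
  set S : Matrix (Fin s) (Fin s) ℂ := CFC.sqrt G with hSdef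
  have hSS : S * S = G := CFC.sqrt_mul_sqrt_self G hGpsd.nonneg
  have hSh : S.IsHermitian := (CFC.sqrt_nonneg G).posSemidef.1
  have hdetS : IsUnit S.det := by
    have hdG : IsUnit G.det := (Matrix.isUnit_iff_isUnit_det G).mp hGpd.isUnit
    have : S.det * S.det = G.det := by rw [← Matrix.det_mul, hSS]
    exact isUnit_of_mul_isUnit_left (this ▸ hdG)
  have hSS' : S⁻¹ * S = 1 := Matrix.nonsing_inv_mul S hdetS
  have hSS'' : S * S⁻¹ = 1 := Matrix.mul_nonsing_inv S hdetS
  have hSinvH : (S⁻¹)ᴴ = S⁻¹ := by rw [Matrix.conjTranspose_nonsing_inv, hSh.eq]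
  set V : Matrix (Fin p) (Fin s) ℂ := W * S⁻¹ with hVdef
  have hVV : Vᴴ * V = 1 := by
    calc Vᴴ * V = (S⁻¹ * Wᴴ) * (W * S⁻¹) := by
          rw [hVdef, Matrix.conjTranspose_mul, hSinvH]
    _ = S⁻¹ * ((Wᴴ * W) * S⁻¹) := by rw [Matrix.mul_assoc, Matrix.mul_assoc]
    _ = S⁻¹ * ((S * S) * S⁻¹) := by rw [← hGdef, hSS]
    _ = (S⁻¹ * S) * (S * S⁻¹) := by rw [Matrix.mul_assoc, Matrix.mul_assoc]
    _ = 1 := by rw [hSS', hSS'', one_mul]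
  have hWVS : W = V * S := by rw [hVdef, Matrix.mul_assoc, hSS', Matrix.mul_one]
  set c : Fin p → ℝ := fun i => ∑ j, Complex.normSq (V i j) with hcdef
  have hc0 : ∀ i, 0 ≤ c i := fun i =>
    Finset.sum_nonneg fun j _ => Complex.normSq_nonneg _
  have hcs : ∑ i, c i = (s : ℝ) := by
    have h := trace_conj_diag (fun _ => (1:ℝ)) V
    simp only [Complex.ofReal_one, Matrix.diagonal_one, Matrix.mul_one, one_mul] at h
    rw [hVV, Matrix.trace_one] at h
    have : ((s : ℝ) : ℂ) = ((∑ i, c i : ℝ) : ℂ) := by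
      rw [← h]; simp
    exact (Complex.ofReal_inj.mp this).symm
  have hc1 : ∀ i, c i ≤ 1 := by
    intro i
    set P : Matrix (Fin p) (Fin p) ℂ := V * Vᴴ with hPdef
    have hPh : Pᴴ = P := by
      rw [hPdef, Matrix.conjTranspose_mul, Matrix.conjTranspose_conjTranspose]
    have hPP : P * P = P := by
      rw [hPdef, Matrix.mul_assoc, ← Matrix.mul_assoc Vᴴ V Vᴴ, hVV, Matrix.one_mul]
    have h1P : (1 - P).PosSemidef := by
      have key : (1 - P)ᴴ * (1 - P) = 1 - P := by
        rw [Matrix.conjTranspose_sub, Matrix.conjTranspose_one, hPh]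
        simp only [mul_sub, sub_mul, Matrix.one_mul, Matrix.mul_one]
        rw [hPP]
        abel
      rw [← key]
      exact Matrix.posSemidef_conjTranspose_mul_self _
    have hd := psd_diag_re' h1P i
    have hPii : P i i = ((c i : ℝ) : ℂ) := by
      rw [hPdef, Matrix.mul_apply, hcdef]
      push_cast
      refine Finset.sum_congr rfl fun j _ => ?_
      rw [Matrix.conjTranspose_apply, Complex.normSq_eq_conj_mul_self]
      ring_nf
      rfl
    rw [Matrix.sub_apply, hPii, Matrix.one_apply_eq, Complex.sub_re, Complex.one_re,
      Complex.ofReal_re] at hd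
    linarith
  set T : Matrix (Fin s) (Fin s) ℂ := Vᴴ * M * V with hTdef
  have hTpsd : T.PosSemidef := hM.conjTranspose_mul_mul_same V
  have e1 : Wᴴ * M * W = S * T * S := by
    rw [hWVS, Matrix.conjTranspose_mul, hSh.eq, hTdef]
    simp only [Matrix.mul_assoc]
  have e2 : Matrix.trace (Wᴴ * M * W) = Matrix.trace T + Matrix.trace ((G - 1) * T) := by
    rw [e1, Matrix.trace_mul_cycle S T S, hSS]
    have : G * T = T + (G - 1) * T := by rw [sub_mul, Matrix.one_mul]; abel
    rw [this, Matrix.trace_add]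
  have h4 : 0 ≤ (Matrix.trace ((G - 1) * T)).re := by
    set R : Matrix (Fin s) (Fin s) ℂ := CFC.sqrt (G - 1) with hRdef
    have hRR : R * R = G - 1 := CFC.sqrt_mul_sqrt_self (G - 1) hW.nonneg
    have hRh : R.IsHermitian := (CFC.sqrt_nonneg (G - 1)).posSemidef.1
    have : Matrix.trace ((G - 1) * T) = Matrix.trace (Rᴴ * T * R) := by
      rw [← hRR, hRh.eq, ← Matrix.trace_mul_cycle R T R, Matrix.mul_assoc]
    rw [this]
    exact psd_trace_re (hTpsd.conjTranspose_mul_mul_same R)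
  have h5 : (Matrix.trace T).re = ∑ i, b i * c i := by
    rw [hTdef, ← hMdef] at *
    rw [show Matrix.trace (Vᴴ * M * V) = ((∑ i, b i * c i : ℝ) : ℂ) from trace_conj_diag b V]
    exact Complex.ofReal_re _
  have hfinal : ∑ i, b i * ∑ j, Complex.normSq (W i j) = (Matrix.trace (Wᴴ * M * W)).re := by
    rw [trace_conj_diag b W, Complex.ofReal_re]
  rw [hfinal, e2, Complex.add_re, h5]
  have := rearrange c hc0 hc1 hcs
  linarith
end core

lemma abel_aux : ∀ (n : ℕ) (ω u v : ℕ → ℝ),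
    (∀ i j : ℕ, i ≤ j → j < n → ω j ≤ ω i) → (0 ≤ ω (n - 1)) →
    (∀ m, m < n → ∑ j ∈ Finset.range (m+1), u j ≤ ∑ j ∈ Finset.range (m+1), v j) →
    ∑ j ∈ Finset.range n, ω j * u j ≤ ∑ j ∈ Finset.range n, ω j * v j := by
  intro n
  induction n with
  | zero => intro ω u v _ _ _; simp
  | succ n IH =>
    intro ω u v hmono hlast h
    have hωn : 0 ≤ ω n := by simpa using hlast
    set ω' : ℕ → ℝ := fun j => ω j - ω n with hω'
    have key : ∀ w : ℕ → ℝ, ∑ j ∈ Finset.range (n+1), ω j * w j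
        = ∑ j ∈ Finset.range n, ω' j * w j + ω n * ∑ j ∈ Finset.range (n+1), w j := by
      intro w
      have e1 : ∑ j ∈ Finset.range (n+1), ω j * w j
          = ∑ j ∈ Finset.range (n+1), (ω' j * w j + ω n * w j) := by
        refine Finset.sum_congr rfl fun j _ => ?_
        simp only [hω']; ring
      rw [e1, Finset.sum_add_distrib, ← Finset.mul_sum, Finset.sum_range_succ (fun j => ω' j * w j)]
      simp only [hω', sub_self, zero_mul, add_zero]
    rw [key u, key v]
    have h1 : ∑ j ∈ Finset.range n, ω' j * u j ≤ ∑ j ∈ Finset.range n, ω' j * v j := by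
      refine IH ω' u v (fun i j hij hj => ?_) ?_ (fun m hm => h m (by omega))
      · simp only [hω']
        have := hmono i j hij (by omega)
        linarith
      · simp only [hω']
        rcases Nat.eq_zero_or_pos n with h0 | h0
        · simp [h0]
        · have := hmono (n-1) n (by omega) (by omega)
          linarith
    have h2 : ω n * ∑ j ∈ Finset.range (n+1), u j ≤ ω n * ∑ j ∈ Finset.range (n+1), v j :=
      mul_le_mul_of_nonneg_left (h n (by omega)) hωn
    linarith

lemma sum_extend {k m : ℕ} (hm : m ≤ k) (f : Fin k → ℂ)
    (hf : ∀ j : Fin k, ¬((j:ℕ) < m) → f j = 0) :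
    ∑ j : Fin k, f j = ∑ j : Fin m, f (Fin.castLE hm j) := by
  classical
  set g : ℕ → ℂ := fun j => if h : j < k then f ⟨j, h⟩ else 0 with hg
  have e1 : ∑ j : Fin k, f j = ∑ j ∈ Finset.range k, g j := by
    rw [← Fin.sum_univ_eq_sum_range]
    refine Finset.sum_congr rfl fun j _ => ?_
    simp only [hg]
    rw [dif_pos j.isLt]
  have e2 : ∑ j ∈ Finset.range k, g j = ∑ j ∈ Finset.range m, g j := by
    refine (Finset.sum_subset (Finset.range_subset_range.mpr hm) fun j hj hjm => ?_).symm
    simp only [Finset.mem_range] at hj hjm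
    simp only [hg]
    rw [dif_pos hj]
    exact hf _ (by simpa using hjm)
  have e3 : ∑ j ∈ Finset.range m, g j = ∑ j : Fin m, f (Fin.castLE hm j) := by
    rw [← Fin.sum_univ_eq_sum_range]
    refine Finset.sum_congr rfl fun j _ => ?_
    simp only [hg]
    rw [dif_pos (lt_of_lt_of_le j.isLt hm)]
    rfl
  rw [e1, e2, e3]

lemma quad_form {n m : Type*} [Fintype n] [Fintype m] [DecidableEq m]
    (N : Matrix n m ℂ) (x : m → ℂ) :
    dotProduct (star x) ((Nᴴ * N - 1) *ᵥ x)
      = dotProduct (star (N *ᵥ x)) (N *ᵥ x) - dotProduct (star x) x := by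
  rw [Matrix.sub_mulVec, dotProduct_sub, Matrix.one_mulVec]
  congr 1
  rw [← Matrix.mulVec_mulVec, dotProduct_mulVec, Matrix.star_mulVec]

lemma restrict_psd {p k m : ℕ} (hm : m ≤ k) (W : Matrix (Fin p) (Fin k) ℂ)
    (hW : (Wᴴ * W - 1).PosSemidef) :
    ((W.submatrix id (Fin.castLE hm))ᴴ * (W.submatrix id (Fin.castLE hm)) - 1).PosSemidef := by
  set W' := W.submatrix id (Fin.castLE hm) with hW'
  refine Matrix.PosSemidef.of_dotProduct_mulVec_nonneg ?_ ?_
  · show _ = _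
    rw [Matrix.conjTranspose_sub, Matrix.conjTranspose_one, Matrix.conjTranspose_mul,
      Matrix.conjTranspose_conjTranspose]
  · intro x
    set x' : Fin k → ℂ := fun j => if h : (j:ℕ) < m then x ⟨j, h⟩ else 0 with hx'
    have hx'0 : ∀ j : Fin k, ¬((j:ℕ) < m) → x' j = 0 := fun j hj => dif_neg hj
    have hx'c : ∀ j : Fin m, x' (Fin.castLE hm j) = x j := by
      intro j
      simp only [hx']
      rw [dif_pos (by simpa using j.isLt : ((Fin.castLE hm j : Fin k) : ℕ) < m)]
      congr 1
    have hdot : dotProduct (star x') x' = dotProduct (star x) x := by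
      rw [dotProduct, dotProduct]
      simp only [Pi.star_apply]
      rw [sum_extend hm (fun j => star (x' j) * x' j) (fun j hj => by simp [hx'0 j hj])]
      exact Finset.sum_congr rfl fun j _ => by rw [hx'c]
    have hmv : W *ᵥ x' = W' *ᵥ x := by
      funext i
      rw [Matrix.mulVec, Matrix.mulVec, dotProduct, dotProduct,
        sum_extend hm (fun j => W i j * x' j) (fun j hj => by simp [hx'0 j hj])]
      exact Finset.sum_congr rfl fun j _ => by rw [hx'c]; rfl
    have h := hW.dotProduct_mulVec_nonneg x'
    rw [quad_form, hmv, hdot] at h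
    rw [quad_form]
    exact h

lemma weighted_aux {p k : ℕ} (hk : 1 ≤ k) (hkp : k ≤ p) (b : Fin p → ℝ)
    (hb0 : ∀ i, 0 ≤ b i) (hbmono : ∀ i j : Fin p, i ≤ j → b i ≤ b j)
    (ω : Fin k → ℝ) (hω : Antitone ω) (hω0 : ∀ i, 0 ≤ ω i)
    (W : Matrix (Fin p) (Fin k) ℂ) (hW : (Wᴴ * W - 1).PosSemidef) :
    ∑ j : Fin k, ω j * b (Fin.castLE hkp j)
      ≤ ∑ j : Fin k, ω j * ∑ i, b i * Complex.normSq (W i j) := by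
  classical
  set ωe : ℕ → ℝ := fun j => if h : j < k then ω ⟨j, h⟩ else 0 with hωe
  set ue : ℕ → ℝ := fun j => if h : j < k then b (Fin.castLE hkp ⟨j, h⟩) else 0 with hue
  set ve : ℕ → ℝ := fun j =>
    if h : j < k then ∑ i, b i * Complex.normSq (W i ⟨j, h⟩) else 0 with hve
  have hmono : ∀ i j : ℕ, i ≤ j → j < k → ωe j ≤ ωe i := by
    intro i j hij hj
    simp only [hωe]
    rw [dif_pos hj, dif_pos (lt_of_le_of_lt hij hj)]
    exact hω (by simpa [Fin.mk_le_mk] using hij)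
  have hlast : 0 ≤ ωe (k - 1) := by
    simp only [hωe]; rw [dif_pos (by omega)]; exact hω0 _
  have hpart : ∀ m, m < k →
      ∑ j ∈ Finset.range (m+1), ue j ≤ ∑ j ∈ Finset.range (m+1), ve j := by
    intro m hm
    have hm1k : m + 1 ≤ k := hm
    have hm1p : m + 1 ≤ p := le_trans hm1k hkp
    set W' := W.submatrix id (Fin.castLE hm1k) with hW'd
    have hcore := core_aux (by omega) hm1p b hb0 hbmono W' (restrict_psd hm1k W hW)
      (fun c hc0 hc1 hcs => rearrange_aux (by omega) hm1p b hb0 hbmono c hc0 hc1 hcs)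
      (fun {m'} d V => trace_conj_diag d V)
    have eL : ∑ j ∈ Finset.range (m+1), ue j = ∑ j : Fin (m+1), b (Fin.castLE hm1p j) := by
      rw [← Fin.sum_univ_eq_sum_range ue (m+1)]
      refine Finset.sum_congr rfl fun j _ => ?_
      simp only [hue]
      rw [dif_pos (lt_of_lt_of_le j.isLt hm1k)]
      congr 1
    have eR : ∑ j ∈ Finset.range (m+1), ve j
        = ∑ i, b i * ∑ j : Fin (m+1), Complex.normSq (W' i j) := by
      rw [← Fin.sum_univ_eq_sum_range ve (m+1)]
      have e1 : ∀ j : Fin (m+1), ve (j : ℕ) = ∑ i, b i * Complex.normSq (W' i j) := by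
        intro j
        simp only [hve]
        rw [dif_pos (lt_of_lt_of_le j.isLt hm1k)]
        refine Finset.sum_congr rfl fun i _ => ?_
        congr 2
      rw [Finset.sum_congr rfl fun j _ => e1 j, Finset.sum_comm]
      exact Finset.sum_congr rfl fun i _ => by rw [Finset.mul_sum]
    rw [eL, eR]
    exact hcore
  have habel := abel_aux k ωe ue ve hmono hlast hpart
  have eL2 : ∑ j ∈ Finset.range k, ωe j * ue j
      = ∑ j : Fin k, ω j * b (Fin.castLE hkp j) := by
    rw [← Fin.sum_univ_eq_sum_range (fun j => ωe j * ue j) k]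
    refine Finset.sum_congr rfl fun j _ => ?_
    simp only [hωe, hue]
    rw [dif_pos j.isLt, dif_pos j.isLt]
  have eR2 : ∑ j ∈ Finset.range k, ωe j * ve j
      = ∑ j : Fin k, ω j * ∑ i, b i * Complex.normSq (W i j) := by
    rw [← Fin.sum_univ_eq_sum_range (fun j => ωe j * ve j) k]
    refine Finset.sum_congr rfl fun j _ => ?_
    simp only [hωe, hve]
    rw [dif_pos j.isLt, dif_pos j.isLt]
  rw [eL2, eR2] at habel
  exact habel
lemma conj_diag_entry {n s : ℕ} (d : Fin n → ℝ) (Z : Matrix (Fin n) (Fin s) ℂ) (j : Fin s) :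
    (Zᴴ * Matrix.diagonal (fun i => (d i : ℂ)) * Z) j j
      = ((∑ i, d i * Complex.normSq (Z i j) : ℝ) : ℂ) := by
  rw [Matrix.mul_assoc, Matrix.mul_apply, Complex.ofReal_sum]
  refine Finset.sum_congr rfl fun i _ => ?_
  rw [Matrix.conjTranspose_apply, Matrix.diagonal_mul]
  push_cast
  rw [← mul_assoc, mul_comm (star (Z i j)) ((d i : ℂ)), mul_assoc]
  congr 1
  rw [Complex.normSq_eq_conj_mul_self]
  rfl

lemma embed_conj_diag {n k : ℕ} (hkn : k ≤ n) (d : Fin n → ℂ) :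
    (Matrix.of fun (i : Fin n) (j : Fin k) => if (i:ℕ) = (j:ℕ) then (1:ℂ) else 0)ᴴ
        * Matrix.diagonal d
        * (Matrix.of fun (i : Fin n) (j : Fin k) => if (i:ℕ) = (j:ℕ) then (1:ℂ) else 0)
      = Matrix.diagonal (fun j => d (Fin.castLE hkn j)) := by
  set E : Matrix (Fin n) (Fin k) ℂ :=
    Matrix.of fun i j => if (i:ℕ) = (j:ℕ) then (1:ℂ) else 0 with hE
  ext j l
  rw [Matrix.mul_apply]
  rw [Finset.sum_eq_single (Fin.castLE hkn j)]
  · simp only [Matrix.mul_diagonal, Matrix.conjTranspose_apply, hE, Matrix.of_apply]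
    have h1 : ((Fin.castLE hkn j : Fin n) : ℕ) = (j : ℕ) := rfl
    rw [if_pos h1]
    simp only [star_one, one_mul]
    rw [Matrix.diagonal_apply]
    by_cases hjl : j = l
    · subst hjl
      simp
    · rw [if_neg (show ¬((Fin.castLE hkn j : Fin n):ℕ) = (l:ℕ) by
        simpa [Fin.ext_iff] using hjl), if_neg hjl, mul_zero]
  · intro i _ hi
    simp only [Matrix.mul_diagonal, Matrix.conjTranspose_apply, hE, Matrix.of_apply]
    rw [if_neg, star_zero, zero_mul, zero_mul]
    intro hij
    exact hi (by ext; simpa using hij)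
  · intro h
    exact absurd (Finset.mem_univ _) h
theorem trace_inf_indefinite_B_pos_constraint
    (p q z k : ℕ) (hp : 1 ≤ p) (hq : 1 ≤ q) (hk : 1 ≤ k) (hkp : k ≤ p)
    (A B : Matrix (Fin (p + q + z)) (Fin (p + q + z)) ℂ)
    (hA : A.IsHermitian) (hB : B.IsHermitian)
    (U : Matrix (Fin (p + q + z)) (Fin (p + q + z)) ℂ) (hU : IsUnit U)
    (a : Fin (p + q + z) → ℝ) (ha : ∀ i, 0 ≤ a i)
    (hsort : ∀ i j : Fin (p + q + z), i ≤ j → (j : ℕ) < p → a i ≤ a j)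
    (hUB : Uᴴ * B * U = Matrix.diagonal fun i : Fin (p + q + z) =>
      if (i : ℕ) < p then (1 : ℂ) else if (i : ℕ) < p + q then -1 else 0)
    (hUA : Uᴴ * A * U = Matrix.diagonal fun i => (a i : ℂ))
    (D : Matrix (Fin k) (Fin k) ℂ) (hD : D.PosSemidef)
    (Q : Matrix (Fin k) (Fin k) ℂ) (hQ : Qᴴ * Q = 1)
    (ω : Fin k → ℝ) (hω : Antitone ω) (hω0 : ∀ i, 0 ≤ ω i)
    (hQD : Qᴴ * D * Q = Matrix.diagonal fun i => (ω i : ℂ)) :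
    IsLeast {t : ℝ | ∃ X : Matrix (Fin (p + q + z)) (Fin k) ℂ,
        Xᴴ * B * X = 1 ∧ t = (Matrix.trace (D * (Xᴴ * A * X))).re}
      (∑ i : Fin k, ω i * a ⟨(i : ℕ), by have := i.isLt; omega⟩) := by
  classical
  have hpn : p ≤ p + q + z := by omega
  have hkn : k ≤ p + q + z := by omega
  set Jd : Fin (p+q+z) → ℂ :=
    fun i => if (i:ℕ) < p then (1:ℂ) else if (i:ℕ) < p + q then -1 else 0 with hJd
  set Ad : Fin (p+q+z) → ℂ := fun i => (a i : ℂ) with hAd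
  set b : Fin p → ℝ := fun i => a (Fin.castLE hpn i) with hb
  have hb0 : ∀ i, 0 ≤ b i := fun i => ha _
  have hbmono : ∀ i j : Fin p, i ≤ j → b i ≤ b j := by
    intro i j hij
    exact hsort _ _ hij (by simpa using j.isLt)
  have hQQ : Q * Qᴴ = 1 := mul_eq_one_comm.mp hQ
  have hdetU : IsUnit U.det := (Matrix.isUnit_iff_isUnit_det U).mp hU
  have hUU : U * U⁻¹ = 1 := Matrix.mul_nonsing_inv U hdetU
  have hconj : ∀ (C : Matrix (Fin (p+q+z)) (Fin (p+q+z)) ℂ)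
      (Y : Matrix (Fin (p+q+z)) (Fin k) ℂ),
      (U * Y)ᴴ * C * (U * Y) = Yᴴ * (Uᴴ * C * U) * Y := by
    intro C Y
    rw [Matrix.conjTranspose_mul]
    simp only [Matrix.mul_assoc]
  have hsum_eq : (∑ i : Fin k, ω i * a ⟨(i : ℕ), by have := i.isLt; omega⟩)
      = ∑ i : Fin k, ω i * b (Fin.castLE hkp i) := by
    refine Finset.sum_congr rfl fun i _ => ?_
    simp only [hb]
    congr 1
  constructor
  · -- membership: the minimum is attained
    set E : Matrix (Fin (p+q+z)) (Fin k) ℂ :=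
      Matrix.of fun i j => if (i:ℕ) = (j:ℕ) then (1:ℂ) else 0 with hE
    refine ⟨U * (E * Qᴴ), ?_, ?_⟩
    · rw [hconj B (E * Qᴴ), hUB]
      have e1 : (E * Qᴴ)ᴴ * Matrix.diagonal Jd * (E * Qᴴ)
          = Q * (Eᴴ * Matrix.diagonal Jd * E) * Qᴴ := by
        rw [Matrix.conjTranspose_mul, Matrix.conjTranspose_conjTranspose]
        simp only [Matrix.mul_assoc]
      rw [e1, embed_conj_diag hkn Jd]
      have e2 : (fun j : Fin k => Jd (Fin.castLE hkn j)) = fun _ => (1:ℂ) := by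
        funext j
        simp only [hJd]
        rw [if_pos]
        exact lt_of_lt_of_le (by simpa using j.isLt) hkp
      rw [e2, Matrix.diagonal_one, Matrix.mul_one, hQQ]
    · rw [hconj A (E * Qᴴ), hUA]
      have e1 : (E * Qᴴ)ᴴ * Matrix.diagonal Ad * (E * Qᴴ)
          = Q * (Eᴴ * Matrix.diagonal Ad * E) * Qᴴ := by
        rw [Matrix.conjTranspose_mul, Matrix.conjTranspose_conjTranspose]
        simp only [Matrix.mul_assoc]
      rw [e1, embed_conj_diag hkn Ad]
      set Nd : Matrix (Fin k) (Fin k) ℂ :=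
        Matrix.diagonal (fun j => Ad (Fin.castLE hkn j)) with hNd
      have e3 : D * (Q * Nd * Qᴴ) = (D * Q * Nd) * Qᴴ := by
        simp only [Matrix.mul_assoc]
      rw [e3, Matrix.trace_mul_comm, ← Matrix.mul_assoc, ← Matrix.mul_assoc, hQD]
      rw [Matrix.diagonal_mul_diagonal, Matrix.trace_diagonal]
      rw [hsum_eq, Complex.re_sum]
      refine Finset.sum_congr rfl fun j _ => ?_
      simp only [hAd, hb]
      rw [← Complex.ofReal_mul, Complex.ofReal_re]
      congr 1
  · -- lower bound
    rintro t ⟨X, hXB, hXt⟩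
    set Y : Matrix (Fin (p+q+z)) (Fin k) ℂ := U⁻¹ * X with hY
    have hXY : X = U * Y := by
      rw [hY, ← Matrix.mul_assoc, hUU, Matrix.one_mul]
    rw [hXY, hconj B Y, hUB] at hXB
    have hYA : Xᴴ * A * X = Yᴴ * Matrix.diagonal Ad * Y := by
      rw [hXY, hconj A Y, hUA]
    set Z : Matrix (Fin (p+q+z)) (Fin k) ℂ := Y * Q with hZ
    have hZJ : Zᴴ * Matrix.diagonal Jd * Z = 1 := by
      have : Zᴴ * Matrix.diagonal Jd * Z = Qᴴ * (Yᴴ * Matrix.diagonal Jd * Y) * Q := by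
        rw [hZ, Matrix.conjTranspose_mul Y Q]
        simp only [Matrix.mul_assoc]
      rw [this, hXB, Matrix.mul_one, hQ]
    have hDQ : D = Q * (Matrix.diagonal fun i => (ω i : ℂ)) * Qᴴ := by
      rw [← hQD]
      have : Q * (Qᴴ * D * Q) * Qᴴ = (Q * Qᴴ) * D * (Q * Qᴴ) := by
        simp only [Matrix.mul_assoc]
      rw [this, hQQ, Matrix.one_mul, Matrix.mul_one]
    have htr : Matrix.trace (D * (Xᴴ * A * X))
        = Matrix.trace ((Matrix.diagonal fun i => (ω i : ℂ)) * (Zᴴ * Matrix.diagonal Ad * Z)) := by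
      rw [hYA]
      nth_rewrite 1 [hDQ]
      have e1 : Q * (Matrix.diagonal fun i => (ω i : ℂ)) * Qᴴ * (Yᴴ * Matrix.diagonal Ad * Y)
          = Q * ((Matrix.diagonal fun i => (ω i : ℂ)) * (Qᴴ * (Yᴴ * Matrix.diagonal Ad * Y))) := by
        simp only [Matrix.mul_assoc]
      rw [e1, Matrix.trace_mul_comm]
      have e2 : (Matrix.diagonal fun i => (ω i : ℂ)) * (Qᴴ * (Yᴴ * Matrix.diagonal Ad * Y)) * Q
          = (Matrix.diagonal fun i => (ω i : ℂ)) * (Zᴴ * Matrix.diagonal Ad * Z) := by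
        rw [hZ, Matrix.conjTranspose_mul Y Q]
        simp only [Matrix.mul_assoc]
      rw [e2]
    have hre : t = ∑ j : Fin k, ω j * ∑ i, a i * Complex.normSq (Z i j) := by
      rw [hXt, htr, Matrix.trace]
      have e1 : ∀ j : Fin k,
          ((Matrix.diagonal fun i => (ω i : ℂ)) * (Zᴴ * Matrix.diagonal Ad * Z)).diag j
            = ((ω j * ∑ i, a i * Complex.normSq (Z i j) : ℝ) : ℂ) := by
        intro j
        rw [Matrix.diag_apply, Matrix.diagonal_mul]
        rw [show (Zᴴ * Matrix.diagonal Ad * Z) j j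
            = ((∑ i, a i * Complex.normSq (Z i j) : ℝ) : ℂ) from conj_diag_entry a Z j]
        push_cast
        ring
      rw [Finset.sum_congr rfl fun j _ => e1 j, ← Complex.ofReal_sum, Complex.ofReal_re]
    -- restrict to the first p rows
    set W : Matrix (Fin p) (Fin k) ℂ := Z.submatrix (Fin.castLE hpn) id with hW
    set e : Fin p ↪ Fin (p+q+z) := ⟨Fin.castLE hpn, Fin.castLE_injective hpn⟩ with he
    set T : Finset (Fin (p+q+z)) := Finset.univ.map e with hT
    have hmemT : ∀ i : Fin (p+q+z), i ∈ T ↔ (i : ℕ) < p := by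
      intro i
      constructor
      · rintro hi
        rw [hT, Finset.mem_map] at hi
        obtain ⟨j, -, rfl⟩ := hi
        exact j.isLt
      · intro hi
        rw [hT, Finset.mem_map]
        exact ⟨⟨(i : ℕ), hi⟩, Finset.mem_univ _, by ext; rfl⟩
    have hWpsd : (Wᴴ * W - 1).PosSemidef := by
      refine Matrix.PosSemidef.of_dotProduct_mulVec_nonneg ?_ ?_
      · show _ = _
        rw [Matrix.conjTranspose_sub, Matrix.conjTranspose_one, Matrix.conjTranspose_mul,
          Matrix.conjTranspose_conjTranspose]
      · intro x
        rw [quad_form]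
        set y : Fin (p+q+z) → ℂ := Z *ᵥ x with hy
        have hWx : W *ᵥ x = fun i => y (Fin.castLE hpn i) := by
          funext i
          rw [Matrix.mulVec, dotProduct, hy, Matrix.mulVec, dotProduct]
          rfl
        have hxx : dotProduct (star x) x
            = ∑ i, star (y i) * (Jd i * y i) := by
          have h0 : dotProduct (star x) ((Zᴴ * Matrix.diagonal Jd * Z) *ᵥ x)
              = dotProduct (star x) x := by
            rw [hZJ, Matrix.one_mulVec]
          rw [← h0, Matrix.mul_assoc Zᴴ (Matrix.diagonal Jd) Z,
            ← Matrix.mulVec_mulVec x Zᴴ (Matrix.diagonal Jd * Z),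
            ← Matrix.mulVec_mulVec x (Matrix.diagonal Jd) Z,
            dotProduct_mulVec (star x) Zᴴ, ← Matrix.star_mulVec, ← hy]
          rw [dotProduct]
          refine Finset.sum_congr rfl fun i _ => ?_
          rw [Matrix.mulVec_diagonal]
          rfl
        have hWxWx : dotProduct (star (W *ᵥ x)) (W *ᵥ x)
            = ∑ i ∈ T, star (y i) * y i := by
          rw [hT, Finset.sum_map, hWx, dotProduct]
          rfl
        have hsplit : ∑ i, star (y i) * (Jd i * y i)
            = ∑ i ∈ T, star (y i) * y i
              - ∑ i ∈ Tᶜ, (if (i:ℕ) < p + q then star (y i) * y i else 0) := by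
          rw [← Finset.sum_add_sum_compl T (fun i => star (y i) * (Jd i * y i))]
          have c1 : ∑ i ∈ T, star (y i) * (Jd i * y i) = ∑ i ∈ T, star (y i) * y i := by
            refine Finset.sum_congr rfl fun i hi => ?_
            rw [show Jd i = 1 from by simp only [hJd]; rw [if_pos ((hmemT i).mp hi)],
              one_mul]
          have c2 : ∑ i ∈ Tᶜ, star (y i) * (Jd i * y i)
              = -∑ i ∈ Tᶜ, (if (i:ℕ) < p + q then star (y i) * y i else 0) := by
            rw [← Finset.sum_neg_distrib]
            refine Finset.sum_congr rfl fun i hi => ?_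
            have hip : ¬ (i : ℕ) < p := fun h =>
              (Finset.mem_compl.mp hi) ((hmemT i).mpr h)
            simp only [hJd]
            rw [if_neg hip]
            by_cases hpq : (i:ℕ) < p + q
            · rw [if_pos hpq, if_pos hpq]
              ring
            · rw [if_neg hpq, if_neg hpq]
              ring
          rw [c1, c2]
          ring
        rw [hxx, hWxWx, hsplit]
        have : ∀ i ∈ Tᶜ, (0:ℂ) ≤ (if (i:ℕ) < p + q then star (y i) * y i else 0) := by
          intro i _
          by_cases hpq : (i:ℕ) < p + q
          · rw [if_pos hpq]
            rw [show star (y i) * y i = ((Complex.normSq (y i) : ℝ) : ℂ) from by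
              rw [Complex.normSq_eq_conj_mul_self]; rfl]
            exact Complex.zero_le_real.mpr (Complex.normSq_nonneg _)
          · rw [if_neg hpq]
        have hsumnn := Finset.sum_nonneg this
        set SS := ∑ i ∈ T, star (y i) * y i
        set RR := ∑ i ∈ Tᶜ, (if (i:ℕ) < p + q then star (y i) * y i else 0)
        calc (0:ℂ) ≤ RR := hsumnn
        _ = SS - (SS - RR) := by ring
    have hstep3 := weighted_aux hk hkp b hb0 hbmono ω hω hω0 W hWpsd
    have hstep1 : ∀ j : Fin k,
        ∑ i, b i * Complex.normSq (W i j) ≤ ∑ i, a i * Complex.normSq (Z i j) := by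
      intro j
      have e1 : ∑ i, b i * Complex.normSq (W i j)
          = ∑ i ∈ T, a i * Complex.normSq (Z i j) := by
        rw [hT, Finset.sum_map]
        rfl
      rw [e1]
      refine Finset.sum_le_sum_of_subset_of_nonneg (Finset.subset_univ T) fun i _ _ => ?_
      exact mul_nonneg (ha i) (Complex.normSq_nonneg _)
    have hstep2 : ∑ j : Fin k, ω j * ∑ i, b i * Complex.normSq (W i j)
        ≤ ∑ j : Fin k, ω j * ∑ i, a i * Complex.normSq (Z i j) :=
      Finset.sum_le_sum fun j _ => mul_le_mul_of_nonneg_left (hstep1 j) (hω0 j)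
    rw [hsum_eq, hre]
    exact le_trans hstep3 hstep2
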